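/- Let (w_k)_{k≥1} be an i.i.d. sequence of standard Gaussian vectors in ℝⁿ, and let 0 < δ ≤ 1/2. Then with probability at least 1 − δ, for every positive integer k, ‖w_k‖ ≤ 2·√(n+1)·√(log(k/δ)). -/

import Mathlib

open MeasureTheory ProbabilityTheory
open scoped ENNReal NNReal

/-- The Euclidean (2-)norm of a vector in `ℝⁿ`. -/
noncomputable def eNorm {n : ℕ} (v : Fin n → ℝ) : ℝ := Real.sqrt (∑ j, v j ^ 2)

/-- Partial sums of `∑ 1/k²` are at most `2 - 2/K` (with `1/0² = 0`). -/
lemma aux_sum_sq_le : ∀ K : ℕ, ∑ i ∈ Finset.range K, (1:ℝ)/(i:ℝ)^2 ≤ 2 - 2/(K:ℝ) := by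
  intro K
  induction K with
  | zero => simp
  | succ K ih =>
    rw [Finset.sum_range_succ]
    rcases Nat.eq_zero_or_pos K with h0 | hpos
    · subst h0; norm_num
    · have hK : (1:ℝ) ≤ K := by exact_mod_cast hpos
      have hK0 : (0:ℝ) < K := by linarith
      have hK1 : (0:ℝ) < (K:ℝ) + 1 := by linarith
      have key : (1:ℝ)/(K:ℝ)^2 + 2/((K:ℝ)+1) ≤ 2/(K:ℝ) := by
        rw [div_add_div _ _ (by positivity) (by positivity),
          div_le_div_iff₀ (by positivity) (by positivity)]
        nlinarith
      have hcast : ((K+1:ℕ):ℝ) = (K:ℝ)+1 := by push_cast; ring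
      rw [hcast]
      linarith

/-- `∫ exp(3x²/8) dγ = 2` for the standard Gaussian `γ`, together with integrability. -/
lemma aux_gauss_integral :
    Integrable (fun x : ℝ => Real.exp ((3/8 : ℝ) * x ^ 2)) (gaussianReal 0 1) ∧
      ∫ x, Real.exp ((3/8 : ℝ) * x ^ 2) ∂(gaussianReal 0 1) = 2 := by
  have hpi : 0 < 2 * Real.pi := by positivity
  have hpt : ∀ x : ℝ, gaussianPDFReal 0 1 x * Real.exp ((3/8 : ℝ) * x ^ 2)
      = (Real.sqrt (2 * Real.pi))⁻¹ * Real.exp (-(1/8 : ℝ) * x ^ 2) := by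
    intro x
    rw [gaussianPDFReal]
    simp only [NNReal.coe_one, mul_one, sub_zero]
    rw [mul_assoc, ← Real.exp_add]
    congr 1
    ring
  have hint : Integrable (fun x : ℝ =>
      (Real.sqrt (2 * Real.pi))⁻¹ * Real.exp (-(1/8:ℝ) * x ^ 2)) :=
    (integrable_exp_neg_mul_sq (by norm_num : (0:ℝ) < 1/8)).const_mul _
  have hmeq : gaussianReal 0 1
      = volume.withDensity (fun x => ((gaussianPDFReal 0 1 x).toNNReal : ℝ≥0∞)) := by
    rw [gaussianReal_of_var_ne_zero _ one_ne_zero]; rfl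
  have hf_meas : Measurable fun x => (gaussianPDFReal 0 1 x).toNNReal :=
    (measurable_gaussianPDFReal 0 1).real_toNNReal
  have hsq2 : Real.sqrt (2 * Real.pi) ≠ 0 := by positivity
  have hval : Real.sqrt (Real.pi / (1/8:ℝ)) = 2 * Real.sqrt (2 * Real.pi) := by
    have h8 : Real.pi / (1/8:ℝ) = 4 * (2 * Real.pi) := by ring
    rw [h8, Real.sqrt_mul (by norm_num : (0:ℝ) ≤ 4),
      show (4:ℝ) = 2^2 by norm_num, Real.sqrt_sq (by norm_num : (0:ℝ) ≤ 2)]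
  constructor
  · rw [hmeq, integrable_withDensity_iff (hf_meas.coe_nnreal_ennreal)
      (ae_of_all _ fun x => ENNReal.coe_lt_top)]
    refine hint.congr (ae_of_all _ fun x => ?_)
    simp only [ENNReal.coe_toReal, Real.coe_toNNReal _ (gaussianPDFReal_nonneg 0 1 x)]
    rw [← hpt x]; exact mul_comm _ _
  · rw [hmeq, integral_withDensity_eq_integral_smul hf_meas]
    have hsmul : ∀ x : ℝ, (gaussianPDFReal 0 1 x).toNNReal • Real.exp ((3/8:ℝ) * x ^ 2)
        = (Real.sqrt (2 * Real.pi))⁻¹ * Real.exp (-(1/8:ℝ) * x ^ 2) := by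
      intro x
      rw [NNReal.smul_def, smul_eq_mul,
        Real.coe_toNNReal _ (gaussianPDFReal_nonneg 0 1 x), hpt]
    simp_rw [hsmul]
    rw [integral_const_mul, integral_gaussian, hval]
    field_simp

/-- Transfer of the previous lemma to a random variable with standard Gaussian law. -/
lemma aux_exp_sq {Ω : Type*} [MeasureSpace Ω] {X : Ω → ℝ} (hX : Measurable X)
    (hd : Measure.map X ℙ = gaussianReal 0 1) :
    Integrable (fun ω => Real.exp ((3/8:ℝ) * X ω ^ 2)) ℙ ∧
      ∫ ω, Real.exp ((3/8:ℝ) * X ω ^ 2) ∂ℙ = 2 := by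
  have hg : Measurable fun x : ℝ => Real.exp ((3/8:ℝ) * x ^ 2) :=
    ((measurable_id.pow_const 2).const_mul _).exp
  constructor
  · have h1 := aux_gauss_integral.1
    rw [← hd] at h1
    exact (integrable_map_measure hg.aestronglyMeasurable hX.aemeasurable).mp h1
  · have h2 := aux_gauss_integral.2
    rw [← hd, integral_map hX.aemeasurable hg.aestronglyMeasurable] at h2
    exact h2

/-- If `(w k)` is an i.i.d. sequence of standard Gaussian vectors in `ℝⁿ` (all scalar entries
`w k · i`, `(k, i) ∈ ℕ × Fin n`, are i.i.d. standard Gaussians) and `0 < δ ≤ 1/2`, then with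
probability at least `1 - δ`, for every positive integer `k`,
`‖w k‖ ≤ 2 √(n+1) √(log(k/δ))`. -/
theorem stmt_4 {Ω : Type*} [MeasureSpace Ω] [IsProbabilityMeasure (ℙ : Measure Ω)]
    {n : ℕ} (w : ℕ → Ω → Fin n → ℝ) (hmeas : ∀ k, Measurable (w k))
    (hindep : iIndepFun
      (fun p : ℕ × Fin n => fun ω => w p.1 ω p.2) ℙ)
    (hdist : ∀ k i, Measure.map (fun ω => w k ω i) ℙ = gaussianReal 0 1)
    (δ : ℝ) (hδ0 : 0 < δ) (hδ1 : δ ≤ 1 / 2) :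
    1 - δ ≤ (ℙ {ω | ∀ k : ℕ, 1 ≤ k →
        eNorm (w k ω) ≤ 2 * Real.sqrt ((n : ℝ) + 1) * Real.sqrt (Real.log (k / δ))}).toReal := by
  classical
  set G : Set Ω := {ω | ∀ k : ℕ, 1 ≤ k →
      eNorm (w k ω) ≤ 2 * Real.sqrt ((n : ℝ) + 1) * Real.sqrt (Real.log (k / δ))} with hG
  set C : ℕ → Set Ω := fun k => {ω | 1 ≤ k →
      eNorm (w k ω) ≤ 2 * Real.sqrt ((n : ℝ) + 1) * Real.sqrt (Real.log (k / δ))} with hC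
  have hYmeas : ∀ k, Measurable fun ω => ∑ j, (w k ω j) ^ 2 := fun k =>
    Finset.measurable_sum _ fun j _ => ((hmeas k).eval).pow_const 2
  have heNmeas : ∀ k, Measurable fun ω => eNorm (w k ω) := fun k =>
    (hYmeas k).sqrt
  have hCmeas : ∀ k : ℕ, MeasurableSet (C k) := by
    intro k
    by_cases hk : 1 ≤ k
    · simp only [hC, hk, forall_true_left]
      exact measurableSet_le (heNmeas k) measurable_const
    · simp only [hC, hk, false_implies]
      exact MeasurableSet.univ
  have hGmeas : MeasurableSet G := by
    have hGi : G = ⋂ k, C k := by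
      ext ω; simp [hG, hC, Set.mem_iInter]
    rw [hGi]
    exact MeasurableSet.iInter hCmeas
  -- main case distinction on n
  rcases Nat.eq_zero_or_pos n with hn0 | hn
  · -- n = 0 : eNorm is zero, event holds surely
    have hGuniv : G = Set.univ := by
      ext ω
      simp only [hG, Set.mem_setOf_eq, Set.mem_univ, iff_true]
      intro k hk
      subst hn0
      have h0 : eNorm (w k ω) = 0 := by simp [eNorm]
      rw [h0]
      positivity
    rw [hGuniv]
    simp only [measure_univ, ENNReal.toReal_one]
    linarith
  -- now 1 ≤ n
  have key : ∀ k : ℕ, 1 ≤ k → ℙ ((C k)ᶜ) ≤ ENNReal.ofReal (δ/2 * (1/(k:ℝ)^2)) := by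
    intro k hk
    have hk1 : (1:ℝ) ≤ (k:ℝ) := by exact_mod_cast hk
    have hkpos : (0:ℝ) < k := by linarith
    have hkd_pos : (0:ℝ) < (k:ℝ)/δ := by positivity
    have hkd : (2:ℝ) ≤ (k:ℝ)/δ := by
      rw [le_div_iff₀ hδ0]; nlinarith
    have hL : 0 ≤ Real.log ((k:ℝ)/δ) := Real.log_nonneg (by linarith)
    set L := Real.log ((k:ℝ)/δ) with hLdef
    set a : ℝ := 4 * ((n:ℝ)+1) * L with ha
    have hn1 : (0:ℝ) ≤ (n:ℝ) + 1 := by positivity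
    have haR : (2 * Real.sqrt ((n : ℝ) + 1) * Real.sqrt L)^2 = a := by
      rw [mul_pow, mul_pow, Real.sq_sqrt hn1, Real.sq_sqrt hL, ha]
      ring
    have hsub : (C k)ᶜ ⊆ {ω | a ≤ ∑ j, (w k ω j)^2} := by
      intro ω hω
      simp only [hC, Set.mem_compl_iff, Set.mem_setOf_eq, hk, forall_true_left, not_le] at hω
      have hRk : 0 ≤ 2 * Real.sqrt ((n : ℝ) + 1) * Real.sqrt L := by positivity
      rw [eNorm] at hω
      have := (Real.lt_sqrt hRk).mp hω
      rw [haR] at this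
      exact le_of_lt this
    refine le_trans (measure_mono hsub) ?_
    -- Chernoff bound
    set S : Finset (ℕ × Fin n) := {k} ×ˢ Finset.univ with hS
    set Xp : ℕ × Fin n → Ω → ℝ := fun p ω => (w p.1 ω p.2)^2 with hXp
    have hXpmeas : ∀ p, Measurable (Xp p) := fun p => ((hmeas p.1).eval).pow_const 2
    have hindep2 : iIndepFun Xp ℙ :=
      hindep.comp (fun _ x => x ^ 2) (fun _ => measurable_id.pow_const 2)
    have hint1 : ∀ p : ℕ × Fin n, Integrable (fun ω => Real.exp ((3/8:ℝ) * Xp p ω)) ℙ := by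
      intro p
      exact (aux_exp_sq ((hmeas p.1).eval) (hdist p.1 p.2)).1
    have hmgf1 : ∀ p : ℕ × Fin n, mgf (Xp p) ℙ (3/8) = 2 := fun p =>
      (aux_exp_sq ((hmeas p.1).eval) (hdist p.1 p.2)).2
    have hintsum : Integrable (fun ω => Real.exp ((3/8:ℝ) * (∑ p ∈ S, Xp p) ω)) ℙ :=
      hindep2.integrable_exp_mul_sum hXpmeas (fun p _ => hint1 p)
    have hcher := measure_ge_le_exp_mul_mgf (X := ∑ p ∈ S, Xp p) (μ := ℙ) a
      (by norm_num : (0:ℝ) ≤ 3/8) hintsum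
    have hmgf : mgf (∑ p ∈ S, Xp p) ℙ (3/8) = 2 ^ n := by
      rw [hindep2.mgf_sum hXpmeas S, Finset.prod_congr rfl (fun p _ => hmgf1 p),
        Finset.prod_const]
      congr 1
      simp [hS]
    rw [hmgf] at hcher
    have hset : {ω | a ≤ ∑ j, (w k ω j)^2} = {ω | a ≤ (∑ p ∈ S, Xp p) ω} := by
      ext ω
      rw [Set.mem_setOf_eq, Set.mem_setOf_eq, Finset.sum_apply, hS,
        Finset.sum_product, Finset.sum_singleton]
    rw [hset]
    -- the real-number estimate
    have hreal : Real.exp (-(3/8) * a) * 2 ^ n ≤ δ/2 * (1/(k:ℝ)^2) := by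
      set q : ℝ := 3 * ((n:ℝ)+1) / 2 with hq
      have hqa : -(3/8) * a = -q * L := by rw [ha, hq]; ring
      have hexp : Real.exp (-(3/8) * a) = ((k:ℝ)/δ) ^ (-q) := by
        rw [Real.rpow_def_of_pos hkd_pos, hqa, hLdef]
        ring_nf
      have hbase_pos : (0:ℝ) < δ/(k:ℝ) := by positivity
      have hinv : ((k:ℝ)/δ) ^ (-q) = (δ/(k:ℝ)) ^ q := by
        rw [Real.rpow_neg (le_of_lt hkd_pos), ← Real.inv_rpow (le_of_lt hkd_pos), inv_div]
      have hq2 : (0:ℝ) ≤ q - 2 := by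
        have : (1:ℝ) ≤ (n:ℝ) := by exact_mod_cast hn
        rw [hq]; linarith
      have hsplit : (δ/(k:ℝ)) ^ q = (δ/(k:ℝ)) ^ (q-2) * (δ/(k:ℝ))^(2:ℕ) := by
        rw [← Real.rpow_natCast (δ/(k:ℝ)) 2, ← Real.rpow_add hbase_pos]
        norm_num
      have hhalf : δ/(k:ℝ) ≤ 1/2 := by
        have : δ/(k:ℝ) ≤ δ := by
          rw [div_le_iff₀ hkpos]; nlinarith
        linarith
      have hb1 : (δ/(k:ℝ)) ^ (q-2) ≤ (1/2:ℝ) ^ (q-2) :=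
        Real.rpow_le_rpow (le_of_lt hbase_pos) hhalf hq2
      have hb2 : (1/2:ℝ) ^ (q-2) * 2 ^ n ≤ 1 := by
        have h1 : (1/2:ℝ) ^ (q-2) * 2 ^ n = (2:ℝ) ^ ((n:ℝ) - (q-2)) := by
          rw [show ((1:ℝ)/2) = 2⁻¹ by norm_num,
            ← Real.rpow_natCast 2 n,
            Real.inv_rpow (by norm_num : (0:ℝ) ≤ 2),
            ← Real.rpow_neg (by norm_num : (0:ℝ) ≤ 2),
            ← Real.rpow_add (by norm_num : (0:ℝ) < 2)]
          ring_nf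
        rw [h1]
        apply Real.rpow_le_one_of_one_le_of_nonpos (by norm_num)
        have : (1:ℝ) ≤ (n:ℝ) := by exact_mod_cast hn
        rw [hq]; linarith
      have hb3 : (δ/(k:ℝ))^(2:ℕ) = δ^2 * (1/(k:ℝ)^2) := by
        field_simp
      calc Real.exp (-(3/8) * a) * 2 ^ n
          = (δ/(k:ℝ)) ^ (q-2) * 2 ^ n * (δ/(k:ℝ))^(2:ℕ) := by
            rw [hexp, hinv, hsplit]; ring
        _ ≤ (1/2:ℝ) ^ (q-2) * 2 ^ n * (δ/(k:ℝ))^(2:ℕ) := by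
            apply mul_le_mul_of_nonneg_right _ (by positivity)
            exact mul_le_mul_of_nonneg_right hb1 (by positivity)
        _ ≤ 1 * (δ/(k:ℝ))^(2:ℕ) := by
            apply mul_le_mul_of_nonneg_right hb2 (by positivity)
        _ = δ^2 * (1/(k:ℝ)^2) := by rw [one_mul, hb3]
        _ ≤ δ/2 * (1/(k:ℝ)^2) := by
            apply mul_le_mul_of_nonneg_right _ (by positivity)
            nlinarith
    rw [ENNReal.le_ofReal_iff_toReal_le (measure_ne_top _ _) (by positivity)]
    exact hcher.trans hreal
  -- union bound
  have hGcbound : ℙ Gᶜ ≤ ENNReal.ofReal δ := by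
    have hGceq : Gᶜ = ⋃ k, (C k)ᶜ := by
      ext ω
      simp [hG, hC, not_forall]
    rw [hGceq]
    refine le_trans (measure_iUnion_le _) ?_
    have hterm : ∀ k : ℕ, ℙ ((C k)ᶜ) ≤ ENNReal.ofReal (δ/2 * (1/(k:ℝ)^2)) := by
      intro k
      rcases Nat.eq_zero_or_pos k with hk0 | hk1
      · subst hk0
        have hC0 : (C 0)ᶜ = (∅ : Set Ω) := by
          simp [hC]
        rw [hC0]
        simp
      · exact key k hk1
    refine le_trans (ENNReal.tsum_le_tsum hterm) ?_
    have hsummable : Summable (fun k : ℕ => δ/2 * (1/(k:ℝ)^2)) :=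
      (Real.summable_one_div_nat_pow.mpr (by norm_num)).mul_left _
    rw [← ENNReal.ofReal_tsum_of_nonneg (fun k => by positivity) hsummable]
    apply ENNReal.ofReal_le_ofReal
    apply Real.tsum_le_of_sum_range_le (fun k => by positivity)
    intro K
    have h2 : ∑ i ∈ Finset.range K, δ/2 * (1/(i:ℝ)^2)
        = δ/2 * ∑ i ∈ Finset.range K, (1:ℝ)/(i:ℝ)^2 := by
      rw [Finset.mul_sum]
    rw [h2]
    have h3 := aux_sum_sq_le K
    have h4 : (0:ℝ) ≤ 2/(K:ℝ) := by positivity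
    nlinarith
  -- conclude
  have h1 : (ℙ Gᶜ).toReal ≤ δ := ENNReal.toReal_le_of_le_ofReal hδ0.le hGcbound
  have h2 : ℙ Gᶜ = 1 - ℙ G := prob_compl_eq_one_sub hGmeas
  have h3 : (ℙ Gᶜ).toReal = 1 - (ℙ G).toReal := by
    rw [h2, ENNReal.toReal_sub_of_le prob_le_one (by simp)]
    simp
  linarith
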